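/- Let M be an irreducible finite set of nonnegative n×n matrices with no zero rows or columns, and let n₁ be the maximum number of positive entries in any row or column of any finite product of matrices from M. Then there exists a product A of matrices from M and a set S of size n₁ such that A_{ij} > 0 for all i, j ∈ S, and A_{ij} = 0 whenever exactly one of i, j belongs to S. -/
import Mathlib


/-- Number of positive entries in row `i` of `B`. -/
noncomputable def rowCount {n : ℕ} (B : Matrix (Fin n) (Fin n) ℝ) (i : Fin n) : ℕ :=
  (Finset.univ.filter fun j => 0 < B i j).card

/-- Number of positive entries in column `j` of `B`. -/
noncomputable def colCount {n : ℕ} (B : Matrix (Fin n) (Fin n) ℝ) (j : Fin n) : ℕ :=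
  (Finset.univ.filter fun i => 0 < B i j).card

open Finset Matrix

/-- Support of row `i`. -/
noncomputable def rowSet {n : ℕ} (B : Matrix (Fin n) (Fin n) ℝ) (i : Fin n) : Finset (Fin n) :=
  Finset.univ.filter fun j => 0 < B i j

noncomputable def colSet {n : ℕ} (B : Matrix (Fin n) (Fin n) ℝ) (j : Fin n) : Finset (Fin n) :=
  Finset.univ.filter fun i => 0 < B i j

lemma rowCount_eq_card {n : ℕ} (B : Matrix (Fin n) (Fin n) ℝ) (i : Fin n) :
    rowCount B i = (rowSet B i).card := rfl

lemma colCount_eq_card {n : ℕ} (B : Matrix (Fin n) (Fin n) ℝ) (j : Fin n) :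
    colCount B j = (colSet B j).card := rfl

lemma mem_rowSet {n : ℕ} {B : Matrix (Fin n) (Fin n) ℝ} {i j : Fin n} :
    j ∈ rowSet B i ↔ 0 < B i j := by simp [rowSet]

lemma mem_colSet {n : ℕ} {B : Matrix (Fin n) (Fin n) ℝ} {i j : Fin n} :
    i ∈ colSet B j ↔ 0 < B i j := by simp [colSet]

lemma rowCount_transpose {n : ℕ} (A : Matrix (Fin n) (Fin n) ℝ) (i : Fin n) :
    rowCount A i = colCount Aᵀ i := rfl

lemma entry_mul_pos_iff {n : ℕ} {A B : Matrix (Fin n) (Fin n) ℝ}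
    (hA : ∀ i j, 0 ≤ A i j) (hB : ∀ i j, 0 ≤ B i j) (i j : Fin n) :
    0 < (A * B) i j ↔ ∃ k, 0 < A i k ∧ 0 < B k j := by
  rw [Matrix.mul_apply]
  constructor
  · intro h
    obtain ⟨k, -, hk⟩ := Finset.exists_ne_zero_of_sum_ne_zero h.ne'
    have h1 : A i k ≠ 0 := fun h0 => hk (by simp [h0])
    have h2 : B k j ≠ 0 := fun h0 => hk (by simp [h0])
    exact ⟨k, (hA i k).lt_of_ne' h1, (hB k j).lt_of_ne' h2⟩
  · rintro ⟨k, h1, h2⟩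
    have hle := Finset.single_le_sum (f := fun k => A i k * B k j)
      (fun k _ => mul_nonneg (hA i k) (hB k j)) (Finset.mem_univ k)
    exact lt_of_lt_of_le (mul_pos h1 h2) hle

section Prods
variable {n : ℕ} {M : Finset (Matrix (Fin n) (Fin n) ℝ)}

lemma listProd_nonneg (hpos : ∀ A ∈ M, ∀ i j, 0 ≤ A i j) :
    ∀ l : List (Matrix (Fin n) (Fin n) ℝ), (∀ P ∈ l, P ∈ M) → ∀ i j, 0 ≤ l.prod i j := by
  intro l
  induction l with
  | nil =>
    intro _ i j
    rw [List.prod_nil, Matrix.one_apply]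
    split <;> norm_num
  | cons A l ih =>
    intro h i j
    rw [List.prod_cons, Matrix.mul_apply]
    exact Finset.sum_nonneg fun k _ =>
      mul_nonneg (hpos A (h A (by simp)) i k) (ih (fun P hP => h P (by simp [hP])) k j)

lemma listProd_row (hpos : ∀ A ∈ M, ∀ i j, 0 ≤ A i j)
    (hrow : ∀ A ∈ M, ∀ i, ∃ j, 0 < A i j) :
    ∀ l : List (Matrix (Fin n) (Fin n) ℝ), (∀ P ∈ l, P ∈ M) → ∀ i, ∃ j, 0 < l.prod i j := by
  intro l
  induction l with
  | nil => intro _ i; exact ⟨i, by simp [Matrix.one_apply]⟩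
  | cons A l ih =>
    intro h i
    obtain ⟨k, hk⟩ := hrow A (h A (by simp)) i
    obtain ⟨j, hj⟩ := ih (fun P hP => h P (by simp [hP])) k
    refine ⟨j, ?_⟩
    rw [List.prod_cons]
    exact (entry_mul_pos_iff (hpos A (h A (by simp)))
      (listProd_nonneg hpos l (fun P hP => h P (by simp [hP]))) i j).2 ⟨k, hk, hj⟩

lemma listProd_col (hpos : ∀ A ∈ M, ∀ i j, 0 ≤ A i j)
    (hcol : ∀ A ∈ M, ∀ j, ∃ i, 0 < A i j) :
    ∀ l : List (Matrix (Fin n) (Fin n) ℝ), (∀ P ∈ l, P ∈ M) → ∀ j, ∃ i, 0 < l.prod i j := by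
  intro l
  induction l with
  | nil => intro _ j; exact ⟨j, by simp [Matrix.one_apply]⟩
  | cons A l ih =>
    intro h j
    obtain ⟨k, hk⟩ := ih (fun P hP => h P (by simp [hP])) j
    obtain ⟨i, hi⟩ := hcol A (h A (by simp)) k
    refine ⟨i, ?_⟩
    rw [List.prod_cons]
    exact (entry_mul_pos_iff (hpos A (h A (by simp)))
      (listProd_nonneg hpos l (fun P hP => h P (by simp [hP]))) i j).2 ⟨k, hi, hk⟩

lemma reach (hM : M.Nonempty) (hpos : ∀ A ∈ M, ∀ i j, 0 ≤ A i j)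
    (hrow : ∀ A ∈ M, ∀ i, ∃ j, 0 < A i j)
    (hirr : ¬ ∃ N₁ N₂ : Finset (Fin n), N₁.Nonempty ∧ N₂.Nonempty ∧ Disjoint N₁ N₂ ∧
      N₁ ∪ N₂ = Finset.univ ∧ ∀ A ∈ M, ∀ i ∈ N₁, ∀ j ∈ N₂, A i j = 0)
    (i j : Fin n) :
    ∃ l : List (Matrix (Fin n) (Fin n) ℝ), (∀ P ∈ l, P ∈ M) ∧ l ≠ [] ∧ 0 < l.prod i j := by
  classical
  set T : Finset (Fin n) := Finset.univ.filter
    (fun k => ∃ l : List (Matrix (Fin n) (Fin n) ℝ),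
      (∀ P ∈ l, P ∈ M) ∧ l ≠ [] ∧ 0 < l.prod i k) with hTdef
  have hmemT : ∀ k, k ∈ T ↔ ∃ l : List (Matrix (Fin n) (Fin n) ℝ),
      (∀ P ∈ l, P ∈ M) ∧ l ≠ [] ∧ 0 < l.prod i k := by
    intro k; simp [hTdef]
  have hTne : T.Nonempty := by
    obtain ⟨A, hA⟩ := hM
    obtain ⟨k, hk⟩ := hrow A hA i
    refine ⟨k, (hmemT k).2 ⟨[A], by simp [hA], by simp, by simpa using hk⟩⟩
  have hTuniv : T = Finset.univ := by
    by_contra hne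
    have h2 : (Finset.univ \ T).Nonempty :=
      Finset.sdiff_nonempty.mpr fun h => hne (Finset.univ_subset_iff.mp h)
    refine hirr ⟨T, Finset.univ \ T, hTne, h2, Finset.disjoint_sdiff,
      Finset.union_sdiff_of_subset (Finset.subset_univ T), ?_⟩
    intro A hA a ha b hb
    by_contra h0
    have hApos : 0 < A a b := (hpos A hA a b).lt_of_ne' h0
    obtain ⟨l, hl1, hl2, hl3⟩ := (hmemT a).1 ha
    have hbT : b ∈ T := by
      refine (hmemT b).2 ⟨l ++ [A], ?_, by simp [hl2], ?_⟩
      · intro P hP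
        rcases List.mem_append.mp hP with h | h
        · exact hl1 P h
        · simp at h; subst h; exact hA
      · rw [List.prod_append, List.prod_singleton]
        exact (entry_mul_pos_iff (listProd_nonneg hpos l hl1) (hpos A hA) i b).2
          ⟨a, hl3, hApos⟩
    exact (Finset.mem_sdiff.mp hb).2 hbT
  have : j ∈ T := hTuniv ▸ Finset.mem_univ j
  exact (hmemT j).1 this

end Prods

/-- Core lemma: abstract multiplicative set `Q` of nonnegative matrices with no zero rows,
row counts bounded by `n₁`, reachability, and a row achieving `n₁`. Then some element of `Q`
is positive on an `n₁ × n₁` square. -/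
lemma key {n : ℕ} (Q : Matrix (Fin n) (Fin n) ℝ → Prop)
    (Qmul : ∀ A B, Q A → Q B → Q (A * B))
    (Qpos : ∀ A, Q A → ∀ i j, 0 ≤ A i j)
    (Qrow : ∀ A, Q A → ∀ i, ∃ j, 0 < A i j)
    (Qreach : ∀ i j : Fin n, ∃ A, Q A ∧ 0 < A i j)
    (n₁ : ℕ) (hbd : ∀ A, Q A → ∀ i, rowCount A i ≤ n₁)
    (B : Matrix (Fin n) (Fin n) ℝ) (hQB : Q B) (i₀ : Fin n)
    (hB1 : rowCount B i₀ = n₁) :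
    ∃ A, Q A ∧ ∃ S : Finset (Fin n), S.card = n₁ ∧ ∀ i ∈ S, ∀ j ∈ S, 0 < A i j := by
  rcases Nat.eq_zero_or_pos n₁ with h0 | hpos1
  · exact ⟨B, hQB, ∅, by simp [h0], by simp⟩
  set R : Finset (Fin n) := rowSet B i₀ with hRdef
  have hRcard : R.card = n₁ := hB1
  have hD : ∀ l : Fin n, l ∈ R → ∃ D, Q D ∧ (∀ m ∈ R, 0 < D l m) ∧
      (∀ k ∈ R, ∀ m, 0 < D k m → m ∈ R) := by
    intro l hl
    obtain ⟨C, hQC, hC⟩ := Qreach l i₀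
    have hQCB : Q (C * B) := Qmul _ _ hQC hQB
    have hCBpos : ∀ m ∈ R, 0 < (C * B) l m := by
      intro m hm
      exact (entry_mul_pos_iff (Qpos C hQC) (Qpos B hQB) l m).2 ⟨i₀, hC, mem_rowSet.mp hm⟩
    refine ⟨C * B, hQCB, hCBpos, ?_⟩
    have hBl : 0 < B i₀ l := mem_rowSet.mp hl
    have hQP : Q (B * (C * B)) := Qmul _ _ hQB hQCB
    have hsub : R ⊆ rowSet (B * (C * B)) i₀ := by
      intro m hm
      exact mem_rowSet.mpr <| (entry_mul_pos_iff (Qpos B hQB) (Qpos _ hQCB) i₀ m).2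
        ⟨l, hBl, hCBpos m hm⟩
    have heq : rowSet (B * (C * B)) i₀ = R := by
      refine (Finset.eq_of_subset_of_card_le hsub ?_).symm
      rw [hRcard, ← rowCount_eq_card]
      exact hbd _ hQP i₀
    intro k hk m hkm
    have hPm : 0 < (B * (C * B)) i₀ m :=
      (entry_mul_pos_iff (Qpos B hQB) (Qpos _ hQCB) i₀ m).2 ⟨k, mem_rowSet.mp hk, hkm⟩
    exact heq ▸ mem_rowSet.mpr hPm
  choose D hQD hDa hDb using hD
  have main : ∀ F : Finset (Fin n), F ⊆ R →
      ∃ W, Q W ∧ (∀ k ∈ R, ∀ m, 0 < W k m → m ∈ R) ∧ (∀ k ∈ F, ∀ m ∈ R, 0 < W k m) := by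
    intro F
    induction F using Finset.induction_on with
    | empty =>
      intro _
      obtain ⟨l₀, hl₀⟩ : R.Nonempty := Finset.card_pos.mp (hRcard ▸ hpos1)
      exact ⟨D l₀ hl₀, hQD _ _, hDb _ _, by simp⟩
    | @insert a F ha ih =>
      intro hsub
      have haR : a ∈ R := hsub (Finset.mem_insert_self a F)
      have hFR : F ⊆ R := (Finset.insert_subset_iff.mp hsub).2
      obtain ⟨W, hQW, hWinv, hWpos⟩ := ih hFR
      obtain ⟨m, hm⟩ := Qrow W hQW a
      have hmR : m ∈ R := hWinv a haR m hm
      refine ⟨W * D m hmR, Qmul _ _ hQW (hQD _ _), ?_, ?_⟩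
      · intro k hk m' h'
        obtain ⟨s, hs1, hs2⟩ :=
          (entry_mul_pos_iff (Qpos W hQW) (Qpos _ (hQD _ _)) k m').1 h'
        exact hDb m hmR s (hWinv k hk s hs1) m' hs2
      · intro r hr m' hm'
        rcases Finset.mem_insert.mp hr with rfl | hrF
        · exact (entry_mul_pos_iff (Qpos W hQW) (Qpos _ (hQD _ _)) r m').2
            ⟨m, hm, hDa m hmR m' hm'⟩
        · exact (entry_mul_pos_iff (Qpos W hQW) (Qpos _ (hQD _ _)) r m').2
            ⟨m, hWpos r hrF m hmR, hDa m hmR m' hm'⟩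
  obtain ⟨W, hQW, -, hWpos⟩ := main R (Finset.Subset.refl R)
  exact ⟨W, hQW, R, hRcard, fun i hi j hj => hWpos i hi j hj⟩

theorem stmt15 (n : ℕ) (M : Finset (Matrix (Fin n) (Fin n) ℝ)) (hM : M.Nonempty)
    (hpos : ∀ A ∈ M, ∀ i j, 0 ≤ A i j)
    (hrow : ∀ A ∈ M, ∀ i, ∃ j, 0 < A i j)
    (hcol : ∀ A ∈ M, ∀ j, ∃ i, 0 < A i j)
    (hirr : ¬ ∃ N₁ N₂ : Finset (Fin n), N₁.Nonempty ∧ N₂.Nonempty ∧ Disjoint N₁ N₂ ∧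
      N₁ ∪ N₂ = Finset.univ ∧ ∀ A ∈ M, ∀ i ∈ N₁, ∀ j ∈ N₂, A i j = 0)
    (n₁ : ℕ)
    (hmax : ∀ l : List (Matrix (Fin n) (Fin n) ℝ), (∀ P ∈ l, P ∈ M) → l ≠ [] →
      ∀ i, rowCount l.prod i ≤ n₁ ∧ colCount l.prod i ≤ n₁)
    (hach : ∃ l : List (Matrix (Fin n) (Fin n) ℝ), (∀ P ∈ l, P ∈ M) ∧ l ≠ [] ∧
      ∃ i, rowCount l.prod i = n₁ ∨ colCount l.prod i = n₁) :
    ∃ l : List (Matrix (Fin n) (Fin n) ℝ), (∀ P ∈ l, P ∈ M) ∧ l ≠ [] ∧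
      ∃ S : Finset (Fin n), S.card = n₁ ∧
        (∀ i ∈ S, ∀ j ∈ S, 0 < l.prod i j) ∧
        (∀ i j : Fin n, Xor' (i ∈ S) (j ∈ S) → l.prod i j = 0) := by
  set Q : Matrix (Fin n) (Fin n) ℝ → Prop :=
    fun A => ∃ l : List (Matrix (Fin n) (Fin n) ℝ),
      (∀ P ∈ l, P ∈ M) ∧ l ≠ [] ∧ l.prod = A with hQdef
  have Qmul : ∀ A B, Q A → Q B → Q (A * B) := by
    rintro A B ⟨la, h1, h2, rfl⟩ ⟨lb, g1, g2, rfl⟩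
    exact ⟨la ++ lb, fun P hP => (List.mem_append.mp hP).elim (h1 P) (g1 P),
      by simp [h2], List.prod_append⟩
  have Qpos : ∀ A, Q A → ∀ i j, 0 ≤ A i j := by
    rintro A ⟨l, h1, -, rfl⟩
    exact listProd_nonneg hpos l h1
  have Qrow : ∀ A, Q A → ∀ i, ∃ j, 0 < A i j := by
    rintro A ⟨l, h1, -, rfl⟩
    exact listProd_row hpos hrow l h1
  have Qcol : ∀ A, Q A → ∀ j, ∃ i, 0 < A i j := by
    rintro A ⟨l, h1, -, rfl⟩
    exact listProd_col hpos hcol l h1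
  have Qreach : ∀ i j : Fin n, ∃ A, Q A ∧ 0 < A i j := by
    intro i j
    obtain ⟨l, h1, h2, h3⟩ := reach hM hpos hrow hirr i j
    exact ⟨l.prod, ⟨l, h1, h2, rfl⟩, h3⟩
  obtain ⟨l0, hl0, hl0ne, i₀, hach'⟩ := hach
  have main : ∃ A, Q A ∧ ∃ S : Finset (Fin n), S.card = n₁ ∧
      ∀ i ∈ S, ∀ j ∈ S, 0 < A i j := by
    rcases hach' with hr | hc
    · exact key Q Qmul Qpos Qrow Qreach n₁
        (fun A hA i => by obtain ⟨l, h1, h2, rfl⟩ := hA; exact (hmax l h1 h2 i).1)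
        l0.prod ⟨l0, hl0, hl0ne, rfl⟩ i₀ hr
    · set Q' : Matrix (Fin n) (Fin n) ℝ → Prop := fun A => Q Aᵀ with hQ'def
      have Q'mul : ∀ A B, Q' A → Q' B → Q' (A * B) := by
        intro A B hA hB
        show Q (A * B)ᵀ
        rw [Matrix.transpose_mul]
        exact Qmul _ _ hB hA
      have Q'pos : ∀ A, Q' A → ∀ i j, 0 ≤ A i j := fun A hA i j => Qpos Aᵀ hA j i
      have Q'row : ∀ A, Q' A → ∀ i, ∃ j, 0 < A i j := fun A hA i => Qcol Aᵀ hA i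
      have Q'reach : ∀ i j : Fin n, ∃ A, Q' A ∧ 0 < A i j := by
        intro i j
        obtain ⟨A, hA, h⟩ := Qreach j i
        refine ⟨Aᵀ, ?_, h⟩
        show Q Aᵀᵀ
        rwa [Matrix.transpose_transpose]
      have Q'bd : ∀ A, Q' A → ∀ i, rowCount A i ≤ n₁ := by
        intro A hA i
        rw [rowCount_transpose]
        obtain ⟨l, h1, h2, hl⟩ := hA
        rw [← hl]
        exact (hmax l h1 h2 i).2
      have hQ'B : Q' l0.prodᵀ := by
        show Q l0.prodᵀᵀ
        rw [Matrix.transpose_transpose]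
        exact ⟨l0, hl0, hl0ne, rfl⟩
      have hB1 : rowCount l0.prodᵀ i₀ = n₁ := by
        rw [rowCount_transpose, Matrix.transpose_transpose]
        exact hc
      obtain ⟨A, hQ'A, S, hS, hSpos⟩ :=
        key Q' Q'mul Q'pos Q'row Q'reach n₁ Q'bd l0.prodᵀ hQ'B i₀ hB1
      exact ⟨Aᵀ, hQ'A, S, hS, fun i hi j hj => hSpos j hj i hi⟩
  obtain ⟨A, hQA, S, hScard, hSpos⟩ := main
  obtain ⟨l, h1, h2, rfl⟩ := hQA
  refine ⟨l, h1, h2, S, hScard, hSpos, ?_⟩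
  intro i j hxor
  have hAnn : ∀ i j, 0 ≤ l.prod i j := listProd_nonneg hpos l h1
  rcases hxor with ⟨hi, hj⟩ | ⟨hj, hi⟩
  · have hsub : S ⊆ rowSet l.prod i := fun k hk => mem_rowSet.mpr (hSpos i hi k hk)
    have heq : rowSet l.prod i = S := by
      refine (Finset.eq_of_subset_of_card_le hsub ?_).symm
      rw [hScard, ← rowCount_eq_card]
      exact (hmax l h1 h2 i).1
    have hj' : ¬ 0 < l.prod i j := fun h => hj (heq ▸ mem_rowSet.mpr h)
    exact le_antisymm (not_lt.mp hj') (hAnn i j)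
  · have hsub : S ⊆ colSet l.prod j := fun k hk => mem_colSet.mpr (hSpos k hk j hj)
    have heq : colSet l.prod j = S := by
      refine (Finset.eq_of_subset_of_card_le hsub ?_).symm
      rw [hScard, ← colCount_eq_card]
      exact (hmax l h1 h2 j).2
    have hi' : ¬ 0 < l.prod i j := fun h => hi (heq ▸ mem_colSet.mpr h)
    exact le_antisymm (not_lt.mp hi') (hAnn i j)
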